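/- Let P₁, P₂ ∈ S^n_{++} with δ := δ_∞(P₁,P₂) ≤ h for some h > 0, where δ_∞(X,Y) = ‖log(Y^{-1/2}XY^{-1/2})‖_∞. Then ‖P₁ − P₂‖ ≤ λ_max(P₂) · (e^h − 1)/h · δ. -/

import Mathlib

open scoped Matrix
open scoped Matrix.Norms.L2Operator

lemma abs_exp_sub_one_le {x h : ℝ} (hh : 0 < h) (hx : |x| ≤ h) :
    |Real.exp x - 1| ≤ (Real.exp h - 1) / h * |x| := by
  have hehk : h + 1 ≤ Real.exp h := by
    have := Real.add_one_le_exp h; linarith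
  rcases le_or_gt 0 x with hx0 | hx0
  · rw [abs_of_nonneg hx0] at hx ⊢
    rw [abs_of_nonneg (by linarith [Real.one_le_exp hx0])]
    have hconv := convexOn_exp.2 (Set.mem_univ (0:ℝ)) (Set.mem_univ h)
      (show (0:ℝ) ≤ 1 - x/h by rw [sub_nonneg]; exact div_le_one_of_le₀ hx hh.le)
      (show (0:ℝ) ≤ x/h by positivity) (show (1 - x/h) + x/h = 1 by ring)
    simp only [smul_eq_mul, mul_zero, zero_add, Real.exp_zero, mul_one] at hconv
    have : Real.exp (x / h * h) ≤ 1 - x/h + x/h * Real.exp h := hconv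
    rw [div_mul_cancel₀ _ hh.ne'] at this
    have heq : (Real.exp h - 1)/h*x = x/h*Real.exp h - x/h := by field_simp
    linarith
  · rw [abs_of_neg hx0] at hx ⊢
    have h1 : Real.exp x - 1 ≤ 0 := by
      have : Real.exp x ≤ 1 := Real.exp_le_one_iff.mpr hx0.le
      linarith
    rw [abs_of_nonpos h1]
    have h2 : x + 1 ≤ Real.exp x := Real.add_one_le_exp x
    have h3 : (1:ℝ) ≤ (Real.exp h - 1) / h := (le_div_iff₀ hh).mpr (by linarith)
    nlinarith

lemma l2_opNorm_diagonal_le {n : ℕ} (d : Fin n → ℝ) {c : ℝ} (hc : 0 ≤ c)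
    (hd : ∀ i, |d i| ≤ c) : ‖(Matrix.diagonal d : Matrix (Fin n) (Fin n) ℝ)‖ ≤ c := by
  rw [Matrix.l2_opNorm_def]
  refine ContinuousLinearMap.opNorm_le_bound _ hc fun x => ?_
  show ‖Matrix.toEuclideanLin (Matrix.diagonal d) x‖ ≤ c * ‖x‖
  rw [Matrix.toEuclideanLin_apply]
  rw [EuclideanSpace.norm_eq, EuclideanSpace.norm_eq]
  have key : ∀ i, ‖((WithLp.equiv 2 (Fin n → ℝ)).symm
      (Matrix.diagonal d *ᵥ (WithLp.equiv 2 (Fin n → ℝ)) x)) i‖ ^ 2 ≤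
      c ^ 2 * ‖x i‖ ^ 2 := by
    intro i
    have : ((WithLp.equiv 2 (Fin n → ℝ)).symm
        (Matrix.diagonal d *ᵥ (WithLp.equiv 2 (Fin n → ℝ)) x)) i = d i * x i := by
      simp [Matrix.mulVec_diagonal]
    rw [this]
    have h1 : ‖d i * x i‖ = |d i| * ‖x i‖ := by
      rw [norm_mul]; rfl
    rw [h1, mul_pow]
    have := hd i
    have h2 : |d i|^2 ≤ c^2 := by nlinarith [abs_nonneg (d i)]
    nlinarith [sq_nonneg (‖x i‖), norm_nonneg (x i)]
  calc Real.sqrt (∑ i, ‖((WithLp.equiv 2 (Fin n → ℝ)).symm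
      (Matrix.diagonal d *ᵥ (WithLp.equiv 2 (Fin n → ℝ)) x)) i‖ ^ 2)
      ≤ Real.sqrt (∑ i, c^2 * ‖x i‖^2) := by
        apply Real.sqrt_le_sqrt
        exact Finset.sum_le_sum fun i _ => key i
    _ = c * Real.sqrt (∑ i, ‖x i‖^2) := by
        rw [← Finset.mul_sum, Real.sqrt_mul (sq_nonneg c), Real.sqrt_sq hc]

lemma l2_opNorm_unitary_le {n : ℕ} (U : Matrix.unitaryGroup (Fin n) ℝ) :
    ‖(U : Matrix (Fin n) (Fin n) ℝ)‖ ≤ 1 := by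
  have h1 : ‖((U : Matrix (Fin n) (Fin n) ℝ))ᴴ * U‖ = ‖(U : Matrix (Fin n) (Fin n) ℝ)‖ *
      ‖(U : Matrix (Fin n) (Fin n) ℝ)‖ := Matrix.l2_opNorm_conjTranspose_mul_self _
  rw [← Matrix.star_eq_conjTranspose, Matrix.UnitaryGroup.star_mul_self] at h1
  have h2 : ‖(1 : Matrix (Fin n) (Fin n) ℝ)‖ ≤ 1 := by
    rw [← Matrix.diagonal_one]
    exact l2_opNorm_diagonal_le _ zero_le_one fun i => by simp
  nlinarith [norm_nonneg (U : Matrix (Fin n) (Fin n) ℝ)]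

lemma l2_opNorm_conj_diag_le {n : ℕ} (U : Matrix.unitaryGroup (Fin n) ℝ) (d : Fin n → ℝ)
    {c : ℝ} (hc : 0 ≤ c) (hd : ∀ i, |d i| ≤ c) :
    ‖(U : Matrix (Fin n) (Fin n) ℝ) * Matrix.diagonal d * (star U : Matrix (Fin n) (Fin n) ℝ)‖
      ≤ c := by
  have hU := l2_opNorm_unitary_le U
  have hUs : ‖(star U : Matrix (Fin n) (Fin n) ℝ)‖ ≤ 1 := by
    rw [Matrix.star_eq_conjTranspose, Matrix.l2_opNorm_conjTranspose]; exact hU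
  have hD := l2_opNorm_diagonal_le d hc hd
  calc ‖(U : Matrix (Fin n) (Fin n) ℝ) * Matrix.diagonal d * (star U : Matrix (Fin n) (Fin n) ℝ)‖
      ≤ ‖(U : Matrix (Fin n) (Fin n) ℝ) * Matrix.diagonal d‖ *
        ‖(star U : Matrix (Fin n) (Fin n) ℝ)‖ := Matrix.l2_opNorm_mul _ _
    _ ≤ (‖(U : Matrix (Fin n) (Fin n) ℝ)‖ * ‖(Matrix.diagonal d : Matrix (Fin n) (Fin n) ℝ)‖) *
        ‖(star U : Matrix (Fin n) (Fin n) ℝ)‖ := by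
        apply mul_le_mul_of_nonneg_right (Matrix.l2_opNorm_mul _ _) (norm_nonneg _)
    _ ≤ (1 * c) * 1 := by
        apply mul_le_mul _ hUs (norm_nonneg _) (by positivity)
        exact mul_le_mul hU hD (norm_nonneg _) zero_le_one
    _ = c := by ring

lemma posDef_conj {n : ℕ} {A B : Matrix (Fin n) (Fin n) ℝ} (hA : A.PosDef)
    (hB : IsUnit B.det) : (B * A * Bᴴ).PosDef := by
  refine Matrix.PosDef.of_dotProduct_mulVec_pos (Matrix.isHermitian_mul_mul_conjTranspose B hA.1) fun x hx => ?_
  have : Invertible Bᴴ := by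
    apply Matrix.invertibleOfIsUnitDet
    rw [Matrix.det_conjTranspose]
    exact hB.star
  have hy : Bᴴ *ᵥ x ≠ 0 := by
    intro h0
    exact hx (Matrix.mulVec_injective_of_invertible Bᴴ (by rw [h0, Matrix.mulVec_zero]))
  simpa only [Matrix.star_mulVec, Matrix.dotProduct_mulVec, Matrix.vecMul_vecMul,
    Matrix.conjTranspose_conjTranspose] using hA.dotProduct_mulVec_pos hy

/-- The Thompson-type metric `δ_∞(X,Y) = ‖log (Y^{-1/2} X Y^{-1/2})‖_∞`, i.e. the maximum
absolute eigenvalue of the matrix logarithm of `Y^{-1/2} X Y^{-1/2}`. -/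
noncomputable def deltaInf {n : ℕ} (X Y : Matrix (Fin n) (Fin n) ℝ)
    (hX : X.PosDef) (hY : Y.PosDef) : ℝ :=
  ⨆ i, |Real.log
    ((Matrix.isHermitian_mul_mul_conjTranspose ((hY.1.eigenvectorUnitary : Matrix (Fin n) (Fin n) ℝ) *
      Matrix.diagonal ((↑) ∘ Real.sqrt ∘ hY.1.eigenvalues) *
      (star hY.1.eigenvectorUnitary : Matrix (Fin n) (Fin n) ℝ))⁻¹ hX.1).eigenvalues i)|

/-- Largest eigenvalue of a Hermitian real matrix. -/
noncomputable def lamMax {n : ℕ} {A : Matrix (Fin n) (Fin n) ℝ} (hA : A.IsHermitian) : ℝ :=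
  ⨆ i, hA.eigenvalues i

theorem norm_diff_le_of_deltaInf {n : ℕ} (P₁ P₂ : Matrix (Fin n) (Fin n) ℝ)
    (hP₁ : P₁.PosDef) (hP₂ : P₂.PosDef) (h : ℝ) (hh : 0 < h)
    (hδ : deltaInf P₁ P₂ hP₁ hP₂ ≤ h) :
    ‖P₁ - P₂‖ ≤ lamMax hP₂.1 * ((Real.exp h - 1) / h) * deltaInf P₁ P₂ hP₁ hP₂ := by
  rcases Nat.eq_zero_or_pos n with hn | hn
  · subst hn
    have hP : P₁ = P₂ := Subsingleton.elim _ _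
    have h1 : lamMax hP₂.1 = 0 := Real.iSup_of_isEmpty _
    have h2 : deltaInf P₁ P₂ hP₁ hP₂ = 0 := by unfold deltaInf; exact Real.iSup_of_isEmpty _
    have h0 : P₁ - P₂ = 0 := by rw [hP, sub_self]
    rw [h0, norm_zero, h1, h2, zero_mul, mul_zero]
  haveI : Nonempty (Fin n) := ⟨⟨0, hn⟩⟩
  have hC0 : 0 ≤ (Real.exp h - 1) / h :=
    div_nonneg (by linarith [Real.add_one_le_exp h]) hh.le
  -- abbreviations
  set S := (hP₂.1.eigenvectorUnitary : Matrix (Fin n) (Fin n) ℝ) *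
      Matrix.diagonal ((↑) ∘ Real.sqrt ∘ hP₂.1.eigenvalues) *
      (star hP₂.1.eigenvectorUnitary : Matrix (Fin n) (Fin n) ℝ) with hSdef
  have hSH : S.IsHermitian := by
    have := Matrix.isHermitian_mul_mul_conjTranspose
      (hP₂.1.eigenvectorUnitary : Matrix (Fin n) (Fin n) ℝ)
      (Matrix.isHermitian_diagonal ((↑) ∘ Real.sqrt ∘ hP₂.1.eigenvalues : Fin n → ℝ))
    rwa [← Matrix.star_eq_conjTranspose, ← Unitary.coe_star] at this
  have hSS : S * S = P₂ := by
    have hVV : (star hP₂.1.eigenvectorUnitary : Matrix (Fin n) (Fin n) ℝ) *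
        (hP₂.1.eigenvectorUnitary : Matrix (Fin n) (Fin n) ℝ) = 1 :=
      Matrix.UnitaryGroup.star_mul_self _
    have hD : Matrix.diagonal ((↑) ∘ Real.sqrt ∘ hP₂.1.eigenvalues) *
        Matrix.diagonal ((↑) ∘ Real.sqrt ∘ hP₂.1.eigenvalues) =
        (Matrix.diagonal hP₂.1.eigenvalues : Matrix (Fin n) (Fin n) ℝ) := by
      rw [Matrix.diagonal_mul_diagonal]
      congr 1
      funext i
      simp [Real.mul_self_sqrt (hP₂.eigenvalues_pos i).le]
    calc S * S = (hP₂.1.eigenvectorUnitary : Matrix (Fin n) (Fin n) ℝ) *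
          (Matrix.diagonal ((↑) ∘ Real.sqrt ∘ hP₂.1.eigenvalues) *
          ((star hP₂.1.eigenvectorUnitary : Matrix (Fin n) (Fin n) ℝ) *
          (hP₂.1.eigenvectorUnitary : Matrix (Fin n) (Fin n) ℝ)) *
          Matrix.diagonal ((↑) ∘ Real.sqrt ∘ hP₂.1.eigenvalues)) *
          (star hP₂.1.eigenvectorUnitary : Matrix (Fin n) (Fin n) ℝ) := by
          simp only [hSdef, Matrix.mul_assoc]
      _ = P₂ := by
          rw [hVV, Matrix.mul_one, hD]
          conv_rhs => rw [hP₂.1.spectral_theorem]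
          rw [Unitary.conjStarAlgAut_apply, RCLike.ofReal_real_eq_id, Function.id_comp]
  have hdet : IsUnit S.det := by
    have hmul : S.det * S.det = P₂.det := by rw [← Matrix.det_mul, hSS]
    have hpos := hP₂.det_pos
    refine isUnit_iff_ne_zero.mpr fun h0 => ?_
    rw [h0, mul_zero] at hmul
    rw [← hmul] at hpos
    exact lt_irrefl _ hpos
  have hdetinv : IsUnit S⁻¹.det := Matrix.isUnit_nonsing_inv_det S hdet
  have hSinv : S * S⁻¹ = 1 := Matrix.mul_nonsing_inv _ hdet
  have hSinv' : S⁻¹ * S = 1 := Matrix.nonsing_inv_mul _ hdet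
  have hSinvH : (S⁻¹)ᴴ = S⁻¹ := by rw [Matrix.conjTranspose_nonsing_inv, hSH.eq]
  have hM : (S⁻¹ * P₁ * (S⁻¹)ᴴ).IsHermitian :=
    Matrix.isHermitian_mul_mul_conjTranspose S⁻¹ hP₁.1
  have hδeq : deltaInf P₁ P₂ hP₁ hP₂ = ⨆ i, |Real.log (hM.eigenvalues i)| := rfl
  have hMpos : (S⁻¹ * P₁ * (S⁻¹)ᴴ).PosDef := posDef_conj hP₁ hdetinv
  have hμpos : ∀ i, 0 < hM.eigenvalues i := fun i => hMpos.eigenvalues_pos i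
  have hlog : ∀ i, |Real.log (hM.eigenvalues i)| ≤ deltaInf P₁ P₂ hP₁ hP₂ := by
    intro i
    rw [hδeq]
    exact le_ciSup (f := fun i => |Real.log (hM.eigenvalues i)|)
      (Set.Finite.bddAbove (Set.finite_range _)) i
  have hδ0 : 0 ≤ deltaInf P₁ P₂ hP₁ hP₂ :=
    le_trans (abs_nonneg _) (hlog (Classical.arbitrary (Fin n)))
  -- decomposition P₁ - P₂ = S (M - 1) S
  have key : P₁ - P₂ = S * ((S⁻¹ * P₁ * (S⁻¹)ᴴ) - 1) * S := by
    rw [Matrix.mul_sub, Matrix.mul_one, Matrix.sub_mul, hSS, hSinvH]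
    congr 1
    rw [show S * (S⁻¹ * P₁ * S⁻¹) * S = S * S⁻¹ * P₁ * (S⁻¹ * S) by
      simp only [Matrix.mul_assoc]]
    rw [hSinv, hSinv', Matrix.one_mul, Matrix.mul_one]
  -- spectral decomposition of M - 1
  set U := hM.eigenvectorUnitary with hUdef
  have hUU : (U : Matrix (Fin n) (Fin n) ℝ) * (star U : Matrix (Fin n) (Fin n) ℝ) = 1 :=
    Matrix.mem_unitaryGroup_iff.mp U.2
  have hspec : (S⁻¹ * P₁ * (S⁻¹)ᴴ) = (U : Matrix (Fin n) (Fin n) ℝ) *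
      Matrix.diagonal hM.eigenvalues * (star U : Matrix (Fin n) (Fin n) ℝ) := by
    conv_lhs => rw [hM.spectral_theorem]
    rw [hUdef, Unitary.conjStarAlgAut_apply, RCLike.ofReal_real_eq_id, Function.id_comp]
  have hM1 : (S⁻¹ * P₁ * (S⁻¹)ᴴ) - 1 = (U : Matrix (Fin n) (Fin n) ℝ) *
      Matrix.diagonal (fun i => hM.eigenvalues i - 1) * (star U : Matrix (Fin n) (Fin n) ℝ) := by
    have hD : Matrix.diagonal (fun i => hM.eigenvalues i - 1)
        = Matrix.diagonal hM.eigenvalues - 1 := by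
      rw [← Matrix.diagonal_one, ← Matrix.diagonal_sub]
    rw [hD, Matrix.mul_sub, Matrix.mul_one, Matrix.sub_mul, hUU]
    conv_lhs => rw [hspec]
  -- norm bound for M - 1
  have hnormM1 : ‖(S⁻¹ * P₁ * (S⁻¹)ᴴ) - 1‖ ≤
      (Real.exp h - 1) / h * deltaInf P₁ P₂ hP₁ hP₂ := by
    rw [hM1]
    refine l2_opNorm_conj_diag_le U _ (mul_nonneg hC0 hδ0) fun i => ?_
    have hexp : Real.exp (Real.log (hM.eigenvalues i)) = hM.eigenvalues i :=
      Real.exp_log (hμpos i)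
    calc |hM.eigenvalues i - 1| = |Real.exp (Real.log (hM.eigenvalues i)) - 1| := by rw [hexp]
      _ ≤ (Real.exp h - 1) / h * |Real.log (hM.eigenvalues i)| :=
          abs_exp_sub_one_le hh (le_trans (hlog i) hδ)
      _ ≤ (Real.exp h - 1) / h * deltaInf P₁ P₂ hP₁ hP₂ :=
          mul_le_mul_of_nonneg_left (hlog i) hC0
  -- norm bound for P₂
  have hlamEq : lamMax hP₂.1 = ⨆ i, hP₂.1.eigenvalues i := rfl
  have hlam : ∀ i, hP₂.1.eigenvalues i ≤ lamMax hP₂.1 := fun i => by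
    rw [hlamEq]
    exact le_ciSup (f := fun i => hP₂.1.eigenvalues i)
      (Set.Finite.bddAbove (Set.finite_range _)) i
  have hlam0 : 0 ≤ lamMax hP₂.1 :=
    le_trans (hP₂.eigenvalues_pos (Classical.arbitrary (Fin n))).le (hlam _)
  have hnormP2 : ‖P₂‖ ≤ lamMax hP₂.1 := by
    have hspec2 : P₂ = (hP₂.1.eigenvectorUnitary : Matrix (Fin n) (Fin n) ℝ) *
        Matrix.diagonal hP₂.1.eigenvalues *
        (star hP₂.1.eigenvectorUnitary : Matrix (Fin n) (Fin n) ℝ) := by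
      conv_lhs => rw [hP₂.1.spectral_theorem]
      rw [Unitary.conjStarAlgAut_apply, RCLike.ofReal_real_eq_id, Function.id_comp]
    conv_lhs => rw [hspec2]
    refine l2_opNorm_conj_diag_le _ _ hlam0 fun i => ?_
    rw [abs_of_pos (hP₂.eigenvalues_pos i)]
    exact hlam i
  have hSnorm : ‖S‖ * ‖S‖ = ‖P₂‖ := by
    rw [← Matrix.l2_opNorm_conjTranspose_mul_self S, hSH.eq, hSS]
  calc ‖P₁ - P₂‖ = ‖S * ((S⁻¹ * P₁ * (S⁻¹)ᴴ) - 1) * S‖ := by rw [← key]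
    _ ≤ ‖S * ((S⁻¹ * P₁ * (S⁻¹)ᴴ) - 1)‖ * ‖S‖ := Matrix.l2_opNorm_mul _ _
    _ ≤ (‖S‖ * ‖(S⁻¹ * P₁ * (S⁻¹)ᴴ) - 1‖) * ‖S‖ :=
        mul_le_mul_of_nonneg_right (Matrix.l2_opNorm_mul _ _) (norm_nonneg _)
    _ = (‖S‖ * ‖S‖) * ‖(S⁻¹ * P₁ * (S⁻¹)ᴴ) - 1‖ := by ring
    _ = ‖P₂‖ * ‖(S⁻¹ * P₁ * (S⁻¹)ᴴ) - 1‖ := by rw [hSnorm]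
    _ ≤ lamMax hP₂.1 * ((Real.exp h - 1) / h * deltaInf P₁ P₂ hP₁ hP₂) :=
        mul_le_mul hnormP2 hnormM1 (norm_nonneg _) hlam0
    _ = lamMax hP₂.1 * ((Real.exp h - 1) / h) * deltaInf P₁ P₂ hP₁ hP₂ := by ring
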